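/- For every real t ≥ 0 one has 2·J₀(t) + J₀(2t) > −1, where J₀ is the zeroth Bessel function of the first kind. -/

import Mathlib

set_option maxHeartbeats 2000000

/-- The zeroth Bessel function of the first kind,
`J₀(t) = ∑_{k=0}^∞ (−1)^k (t/2)^{2k} / (k!)²`. -/
noncomputable def besselJ0 (t : ℝ) : ℝ :=
  ∑' k : ℕ, (-1 : ℝ) ^ k * (t / 2) ^ (2 * k) / ((Nat.factorial k : ℝ)) ^ 2

noncomputable def J1 (t : ℝ) : ℝ :=
  ∑' k : ℕ, (-1 : ℝ) ^ k * (t / 2) ^ (2 * k + 1) / ((Nat.factorial k : ℝ) * (Nat.factorial (k+1) : ℝ))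

noncomputable def J1d (t : ℝ) : ℝ :=
  ∑' k : ℕ, (-1 : ℝ) ^ k * ((2 * k + 1) * (t / 2) ^ (2 * k)) / (2 * (Nat.factorial k : ℝ) * (Nat.factorial (k+1) : ℝ))

open Metric Set

lemma fact_pos' (k : ℕ) : (0:ℝ) < (Nat.factorial k : ℝ) := by
  exact_mod_cast Nat.factorial_pos k

lemma one_le_fact (k : ℕ) : (1:ℝ) ≤ (Nat.factorial k : ℝ) := by
  exact_mod_cast Nat.one_le_iff_ne_zero.mpr (Nat.factorial_ne_zero k)

/-- master comparison -/
lemma summable_of_le_pow_div_factorial {f : ℕ → ℝ} (x C : ℝ)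
    (h : ∀ k, |f k| ≤ C * x ^ k / (Nat.factorial k : ℝ)) : Summable f := by
  apply Summable.of_norm
  apply Summable.of_nonneg_of_le (fun k => norm_nonneg _) (fun k => h k)
  simpa [div_eq_mul_inv, mul_assoc] using (Real.summable_pow_div_factorial x).mul_left C

lemma summable_J0 (t : ℝ) :
    Summable (fun k : ℕ => (-1 : ℝ) ^ k * (t / 2) ^ (2 * k) / ((Nat.factorial k : ℝ)) ^ 2) := by
  apply summable_of_le_pow_div_factorial ((t/2)^2) 1
  intro k
  have h1 : |(-1 : ℝ) ^ k * (t / 2) ^ (2 * k) / ((Nat.factorial k : ℝ)) ^ 2|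
      = ((t/2)^2) ^ k / ((Nat.factorial k : ℝ)) ^ 2 := by
    rw [abs_div, abs_mul, abs_pow, abs_pow, abs_neg, abs_one, one_pow, one_mul,
      abs_pow, pow_mul, sq_abs, abs_of_nonneg (le_of_lt (fact_pos' k))]
  rw [h1, one_mul]
  apply div_le_div_of_nonneg_left ?_ (fact_pos' k) ?_
  · positivity
  · calc (Nat.factorial k : ℝ) = 1 * (Nat.factorial k : ℝ) := (one_mul _).symm
      _ ≤ (Nat.factorial k : ℝ) * (Nat.factorial k : ℝ) :=
        mul_le_mul_of_nonneg_right (one_le_fact k) (le_of_lt (fact_pos' k))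
      _ = _ := (sq _).symm

lemma summable_J1 (t : ℝ) :
    Summable (fun k : ℕ => (-1 : ℝ) ^ k * (t / 2) ^ (2 * k + 1) / ((Nat.factorial k : ℝ) * (Nat.factorial (k+1) : ℝ))) := by
  apply summable_of_le_pow_div_factorial ((t/2)^2) |t/2|
  intro k
  have h1 : |(-1 : ℝ) ^ k * (t / 2) ^ (2 * k + 1) / ((Nat.factorial k : ℝ) * (Nat.factorial (k+1) : ℝ))|
      = |t/2| * ((t/2)^2) ^ k / ((Nat.factorial k : ℝ) * (Nat.factorial (k+1) : ℝ)) := by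
    rw [abs_div, abs_mul, abs_pow, abs_neg, abs_one, one_pow, one_mul, abs_pow,
      abs_of_nonneg (by positivity : (0:ℝ) ≤ (Nat.factorial k : ℝ) * (Nat.factorial (k+1) : ℝ)),
      pow_succ, pow_mul, sq_abs]
    ring
  rw [h1, mul_div_assoc, mul_div_assoc]
  apply mul_le_mul_of_nonneg_left ?_ (abs_nonneg _)
  apply div_le_div_of_nonneg_left ?_ (fact_pos' k) ?_
  · positivity
  · calc (Nat.factorial k : ℝ) = (Nat.factorial k : ℝ) * 1 := (mul_one _).symm
      _ ≤ _ := mul_le_mul_of_nonneg_left (one_le_fact (k+1)) (le_of_lt (fact_pos' k))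

lemma summable_J1d (t : ℝ) :
    Summable (fun k : ℕ => (-1 : ℝ) ^ k * ((2 * k + 1) * (t / 2) ^ (2 * k)) / (2 * (Nat.factorial k : ℝ) * (Nat.factorial (k+1) : ℝ))) := by
  apply summable_of_le_pow_div_factorial ((t/2)^2) 1
  intro k
  have h1 : |(-1 : ℝ) ^ k * ((2 * k + 1) * (t / 2) ^ (2 * k)) / (2 * (Nat.factorial k : ℝ) * (Nat.factorial (k+1) : ℝ))|
      = ((2*k+1) * ((t/2)^2) ^ k) / (2 * (Nat.factorial k : ℝ) * (Nat.factorial (k+1) : ℝ)) := by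
    rw [abs_div, abs_mul, abs_mul, abs_pow, abs_neg, abs_one, one_pow, one_mul, abs_pow,
      abs_of_nonneg (by positivity : (0:ℝ) ≤ 2 * (Nat.factorial k : ℝ) * (Nat.factorial (k+1) : ℝ)),
      pow_mul, sq_abs, abs_of_nonneg (by positivity : (0:ℝ) ≤ (2*(k:ℝ)+1))]
  rw [h1, one_mul]
  rw [div_le_div_iff₀ (by positivity) (fact_pos' k)]
  have hk1 : ((2:ℝ)*k+1) * (Nat.factorial k : ℝ) ≤ 2 * (Nat.factorial k : ℝ) * (Nat.factorial (k+1) : ℝ) := by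
    have : ((k:ℝ)+1) ≤ (Nat.factorial (k+1) : ℝ) := by
      exact_mod_cast Nat.self_le_factorial (k+1)
    nlinarith [fact_pos' k, fact_pos' (k+1)]
  have hx : (0:ℝ) ≤ ((t/2)^2)^k := by positivity
  nlinarith [hk1, hx]

lemma fact_succ_cast (j : ℕ) : (Nat.factorial (j+1) : ℝ) = ((j:ℝ)+1) * (Nat.factorial j : ℝ) := by
  rw [Nat.factorial_succ]; push_cast; ring

lemma hasDerivAt_J0term (k : ℕ) (y : ℝ) :
    HasDerivAt (fun y : ℝ => (-1:ℝ)^k * (y/2)^(2*k) / ((Nat.factorial k : ℝ))^2)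
      ((-1:ℝ)^k * ((k:ℝ) * (y/2)^(2*k-1)) / ((Nat.factorial k : ℝ))^2) y := by
  have h := ((((hasDerivAt_id y).div_const 2).fun_pow (2*k)).const_mul
    ((-1:ℝ)^k)).div_const (((Nat.factorial k : ℝ))^2)
  refine h.congr_deriv ?_
  simp only [id_eq]
  push_cast
  ring

lemma hasDerivAt_J1term (k : ℕ) (y : ℝ) :
    HasDerivAt (fun y : ℝ => (-1:ℝ)^k * (y/2)^(2*k+1) / ((Nat.factorial k : ℝ) * (Nat.factorial (k+1) : ℝ)))
      ((-1:ℝ)^k * ((2*(k:ℝ)+1) * (y/2)^(2*k)) / (2 * (Nat.factorial k : ℝ) * (Nat.factorial (k+1) : ℝ))) y := by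
  have h := ((((hasDerivAt_id y).div_const 2).fun_pow (2*k+1)).const_mul
    ((-1:ℝ)^k)).div_const ((Nat.factorial k : ℝ) * (Nat.factorial (k+1) : ℝ))
  refine h.congr_deriv ?_
  have h1 : 2*k+1-1 = 2*k := rfl
  rw [h1]
  simp only [id_eq]
  push_cast
  ring

lemma summable_u0 (R : ℝ) (hR : 1 ≤ R) :
    Summable (fun k : ℕ => (k:ℝ) * (R/2)^(2*k-1) / ((Nat.factorial k : ℝ))^2) := by
  apply summable_of_le_pow_div_factorial ((R/2)^2) (2/R)
  have hR0 : (0:ℝ) < R := by linarith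
  intro k
  rw [abs_of_nonneg (by positivity)]
  rcases k with _ | j
  · simp; positivity
  · have h2k : 2*(j+1)-1 = 2*j+1 := by omega
    rw [h2k]
    have h3 : ((R/2)^2)^(j+1) = (R/2)^(2*j+1) * (R/2) := by
      rw [← pow_mul, ← pow_succ]
      congr 1 <;> omega
    have hrhs : 2/R * ((R/2)^2)^(j+1) / (Nat.factorial (j+1) : ℝ)
        = (R/2)^(2*j+1) / (Nat.factorial (j+1) : ℝ) := by
      rw [h3]
      field_simp
    rw [hrhs]
    rw [div_le_div_iff₀ (by positivity) (fact_pos' (j+1))]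
    have h1 : ((j:ℝ)+1) ≤ (Nat.factorial (j+1) : ℝ) := by
      exact_mod_cast Nat.self_le_factorial (j+1)
    have key : ((j:ℝ)+1) * (Nat.factorial (j+1) : ℝ) ≤ (Nat.factorial (j+1) : ℝ)^2 := by
      nlinarith [fact_pos' (j+1)]
    have hp : (0:ℝ) ≤ (R/2)^(2*j+1) := by positivity
    have h4 := mul_le_mul_of_nonneg_left key hp
    push_cast
    nlinarith [h4]

lemma summable_u1 (R : ℝ) :
    Summable (fun k : ℕ => (2*(k:ℝ)+1) * (R/2)^(2*k) / (2 * (Nat.factorial k : ℝ) * (Nat.factorial (k+1) : ℝ))) := by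
  apply summable_of_le_pow_div_factorial ((R/2)^2) 1
  intro k
  have hden : (0:ℝ) < 2 * (Nat.factorial k : ℝ) * (Nat.factorial (k+1) : ℝ) :=
    mul_pos (mul_pos two_pos (fact_pos' k)) (fact_pos' (k+1))
  have hnum : (0:ℝ) ≤ (2*(k:ℝ)+1) * (R/2)^(2*k) := by
    have h0 : (0:ℝ) ≤ (R/2)^(2*k) := by rw [pow_mul]; positivity
    have h00 : (0:ℝ) ≤ 2*(k:ℝ)+1 := by positivity
    exact mul_nonneg h00 h0
  rw [abs_of_nonneg (div_nonneg hnum hden.le), one_mul, pow_mul,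
    div_le_div_iff₀ hden (fact_pos' k)]
  have h1 : ((k:ℝ)+1) ≤ (Nat.factorial (k+1) : ℝ) := by
    exact_mod_cast Nat.self_le_factorial (k+1)
  have h2 : (2*(k:ℝ)+1) * (Nat.factorial k : ℝ) ≤ 2 * (Nat.factorial k:ℝ) * (Nat.factorial (k+1):ℝ) := by
    nlinarith [fact_pos' k, h1]
  have hp : (0:ℝ) ≤ ((R/2)^2)^k := by positivity
  have h3 := mul_le_mul_of_nonneg_left h2 hp
  nlinarith [h3]

lemma J0_hasDerivAt (t : ℝ) : HasDerivAt besselJ0 (-J1 t) t := by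
  set R : ℝ := |t| + 2 with hRdef
  have habs : (0:ℝ) ≤ |t| := abs_nonneg t
  have hR : 1 ≤ R := by rw [hRdef]; linarith
  have hball : t ∈ ball (0:ℝ) R := by
    rw [mem_ball_zero_iff, Real.norm_eq_abs, hRdef]; linarith
  have hbnd : ∀ (k : ℕ) (y : ℝ), y ∈ ball (0:ℝ) R →
      ‖(-1:ℝ)^k * ((k:ℝ) * (y/2)^(2*k-1)) / ((Nat.factorial k : ℝ))^2‖
        ≤ (k:ℝ) * (R/2)^(2*k-1) / ((Nat.factorial k : ℝ))^2 := by
    intro k y hy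
    rw [mem_ball_zero_iff, Real.norm_eq_abs] at hy
    have hy' : |y| ≤ R := le_of_lt hy
    have heq : ‖(-1:ℝ)^k * ((k:ℝ) * (y/2)^(2*k-1)) / ((Nat.factorial k : ℝ))^2‖
        = (k:ℝ) * (|y|/2)^(2*k-1) / ((Nat.factorial k : ℝ))^2 := by
      rw [Real.norm_eq_abs, abs_div, abs_mul, abs_pow, abs_neg, abs_one, one_pow, one_mul,
        abs_mul, abs_pow, abs_div, Nat.abs_cast, abs_of_nonneg (by norm_num : (0:ℝ) ≤ 2),
        abs_of_nonneg (by positivity : (0:ℝ) ≤ ((Nat.factorial k : ℝ))^2)]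
    rw [heq]
    have h2 : (|y|/2)^(2*k-1) ≤ (R/2)^(2*k-1) :=
      pow_le_pow_left₀ (by positivity) (by linarith) _
    have h3 : (k:ℝ) * (|y|/2)^(2*k-1) ≤ (k:ℝ) * (R/2)^(2*k-1) :=
      mul_le_mul_of_nonneg_left h2 (by positivity)
    rw [div_le_div_iff₀ (by positivity) (by positivity)]
    nlinarith [h3, sq_nonneg ((Nat.factorial k : ℝ))]
  have H := hasDerivAt_tsum_of_isPreconnected
    (u := fun k : ℕ => (k:ℝ) * (R/2)^(2*k-1) / ((Nat.factorial k : ℝ))^2)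
    (summable_u0 R hR) isOpen_ball (convex_ball (0:ℝ) R).isPreconnected
    (g := fun k y => (-1:ℝ)^k * (y/2)^(2*k) / ((Nat.factorial k : ℝ))^2)
    (g' := fun k y => (-1:ℝ)^k * ((k:ℝ) * (y/2)^(2*k-1)) / ((Nat.factorial k : ℝ))^2)
    (fun k y _ => hasDerivAt_J0term k y)
    (fun k y hy => hbnd k y hy) hball (summable_J0 t) hball
  have hs : Summable (fun k : ℕ => (-1:ℝ)^k * ((k:ℝ) * (t/2)^(2*k-1)) / ((Nat.factorial k : ℝ))^2) :=
    Summable.of_norm_bounded (summable_u0 R hR) (fun k => hbnd k t hball)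
  have heq : (∑' k : ℕ, (-1:ℝ)^k * ((k:ℝ) * (t/2)^(2*k-1)) / ((Nat.factorial k : ℝ))^2) = -J1 t := by
    rw [Summable.tsum_eq_zero_add hs]
    simp only [Nat.cast_zero, zero_mul, mul_zero, zero_div, zero_add, pow_zero, one_mul]
    rw [J1, ← tsum_neg]
    apply tsum_congr
    intro j
    have h2 : 2*(j+1)-1 = 2*j+1 := by omega
    rw [h2, fact_succ_cast j]
    push_cast
    have hfj := fact_pos' j
    have hfj1 := fact_pos' (j+1)
    field_simp
    ring
  rw [← heq]
  exact H

lemma J1_hasDerivAt (t : ℝ) : HasDerivAt J1 (J1d t) t := by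
  set R : ℝ := |t| + 2 with hRdef
  have habs : (0:ℝ) ≤ |t| := abs_nonneg t
  have hball : t ∈ ball (0:ℝ) R := by
    rw [mem_ball_zero_iff, Real.norm_eq_abs, hRdef]; linarith
  have hbnd : ∀ (k : ℕ) (y : ℝ), y ∈ ball (0:ℝ) R →
      ‖(-1:ℝ)^k * ((2*(k:ℝ)+1) * (y/2)^(2*k)) / (2 * (Nat.factorial k : ℝ) * (Nat.factorial (k+1) : ℝ))‖
        ≤ (2*(k:ℝ)+1) * (R/2)^(2*k) / (2 * (Nat.factorial k : ℝ) * (Nat.factorial (k+1) : ℝ)) := by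
    intro k y hy
    rw [mem_ball_zero_iff, Real.norm_eq_abs] at hy
    have hy' : |y| ≤ R := le_of_lt hy
    have heq : ‖(-1:ℝ)^k * ((2*(k:ℝ)+1) * (y/2)^(2*k)) / (2 * (Nat.factorial k : ℝ) * (Nat.factorial (k+1) : ℝ))‖
        = (2*(k:ℝ)+1) * (|y|/2)^(2*k) / (2 * (Nat.factorial k : ℝ) * (Nat.factorial (k+1) : ℝ)) := by
      rw [Real.norm_eq_abs, abs_div, abs_mul, abs_pow, abs_neg, abs_one, one_pow, one_mul,
        abs_mul, abs_pow, abs_div, abs_of_nonneg (by norm_num : (0:ℝ) ≤ 2),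
        abs_of_nonneg (by positivity : (0:ℝ) ≤ 2*(Nat.factorial k : ℝ)*(Nat.factorial (k+1) : ℝ)),
        abs_of_nonneg (by positivity : (0:ℝ) ≤ 2*(k:ℝ)+1)]
    rw [heq]
    have h2 : (|y|/2)^(2*k) ≤ (R/2)^(2*k) :=
      pow_le_pow_left₀ (by positivity) (by linarith) _
    have h3 : (2*(k:ℝ)+1) * (|y|/2)^(2*k) ≤ (2*(k:ℝ)+1) * (R/2)^(2*k) :=
      mul_le_mul_of_nonneg_left h2 (by positivity)
    rw [div_le_div_iff₀ (by positivity) (by positivity)]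
    nlinarith [h3, mul_pos (mul_pos (by norm_num : (0:ℝ) < 2) (fact_pos' k)) (fact_pos' (k+1))]
  have H := hasDerivAt_tsum_of_isPreconnected
    (u := fun k : ℕ => (2*(k:ℝ)+1) * (R/2)^(2*k) / (2 * (Nat.factorial k : ℝ) * (Nat.factorial (k+1) : ℝ)))
    (summable_u1 R) isOpen_ball (convex_ball (0:ℝ) R).isPreconnected
    (g := fun k y => (-1:ℝ)^k * (y/2)^(2*k+1) / ((Nat.factorial k : ℝ) * (Nat.factorial (k+1) : ℝ)))
    (g' := fun k y => (-1:ℝ)^k * ((2*(k:ℝ)+1) * (y/2)^(2*k)) / (2 * (Nat.factorial k : ℝ) * (Nat.factorial (k+1) : ℝ)))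
    (fun k y _ => hasDerivAt_J1term k y)
    (fun k y hy => hbnd k y hy) hball (summable_J1 t) hball
  have heq : (∑' k : ℕ, (-1:ℝ)^k * ((2*(k:ℝ)+1) * (t/2)^(2*k)) / (2 * (Nat.factorial k : ℝ) * (Nat.factorial (k+1) : ℝ))) = J1d t := by
    rw [J1d]
  rw [← heq]
  exact H

lemma J1d_identity (t : ℝ) : t * J1d t + J1 t = t * besselJ0 t := by
  rw [J1d, J1, besselJ0, ← tsum_mul_left, ← tsum_mul_left,
    ← Summable.tsum_add ((summable_J1d t).mul_left t) (summable_J1 t)]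
  apply tsum_congr
  intro k
  rw [fact_succ_cast k]
  have h1 := fact_pos' k
  field_simp
  ring

noncomputable def Mf (t : ℝ) : ℝ := besselJ0 t ^ 2 + J1 t ^ 2

lemma Mf_hasDerivAt (t : ℝ) :
    HasDerivAt Mf (2 * besselJ0 t * (-J1 t) + 2 * J1 t * J1d t) t := by
  have h := ((J0_hasDerivAt t).fun_pow 2).add ((J1_hasDerivAt t).fun_pow 2)
  refine h.congr_deriv ?_
  push_cast
  ring

lemma Mf_diff : Differentiable ℝ Mf := fun x => (Mf_hasDerivAt x).differentiableAt

lemma Mf_anti : AntitoneOn Mf (Ici (0:ℝ)) := by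
  apply antitoneOn_of_deriv_nonpos (convex_Ici 0) Mf_diff.continuous.continuousOn
    Mf_diff.differentiableOn
  intro x hx
  rw [interior_Ici, mem_Ioi] at hx
  rw [(Mf_hasDerivAt x).deriv]
  have hid := J1d_identity x
  have hx0 : x ≠ 0 := ne_of_gt hx
  have h2 : x * (2 * besselJ0 x * (-J1 x) + 2 * J1 x * J1d x) = -2 * (J1 x)^2 := by
    linear_combination (2 * J1 x) * hid
  nlinarith [sq_nonneg (J1 x), hx]

lemma besselJ0_zero : besselJ0 0 = 1 := by
  rw [besselJ0, tsum_eq_single 0]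
  · norm_num
  · intro b hb
    have : (2*b) ≠ 0 := by omega
    simp [zero_pow this]

lemma J1_zero : J1 0 = 0 := by
  rw [J1]
  have h : ∀ k : ℕ, (-1 : ℝ) ^ k * ((0:ℝ) / 2) ^ (2 * k + 1) / ((Nat.factorial k : ℝ) * (Nat.factorial (k+1) : ℝ)) = 0 := by
    intro k
    simp [zero_pow (Nat.succ_ne_zero (2*k))]
  rw [tsum_congr h, tsum_zero]

lemma Mf_zero : Mf 0 = 1 := by rw [Mf, besselJ0_zero, J1_zero]; norm_num

lemma Mf_le_one (t : ℝ) (ht : 0 ≤ t) : Mf t ≤ 1 := by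
  have := Mf_anti (self_mem_Ici) (mem_Ici.mpr ht) ht
  rwa [Mf_zero] at this

lemma absJ1_le_one (t : ℝ) (ht : 0 ≤ t) : |J1 t| ≤ 1 := by
  rw [← sq_le_one_iff_abs_le_one]
  have := Mf_le_one t ht
  rw [Mf] at this
  nlinarith [sq_nonneg (besselJ0 t)]

lemma Mf_le_of_ge (a t : ℝ) (ha : 0 ≤ a) (hat : a ≤ t) : Mf t ≤ Mf a :=
  Mf_anti (mem_Ici.mpr ha) (mem_Ici.mpr (le_trans ha hat)) hat

lemma f_lip (s t : ℝ) (hs : 0 ≤ s) (ht : 0 ≤ t) :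
    |(2 * besselJ0 t + besselJ0 (2*t)) - (2 * besselJ0 s + besselJ0 (2*s))| ≤ 4 * |t - s| := by
  have hD : ∀ x : ℝ, HasDerivAt (fun y => 2 * besselJ0 y + besselJ0 (2*y))
      (2 * (-J1 x) + (-J1 (2*x)) * 2) x := by
    intro x
    have h1 := (J0_hasDerivAt x).const_mul (2:ℝ)
    have h2t : HasDerivAt (fun y : ℝ => 2*y) 2 x := by
      simpa using (hasDerivAt_id x).const_mul (2:ℝ)
    have h2 := (J0_hasDerivAt (2*x)).comp x h2t
    exact h1.add h2
  have := (convex_Ici (0:ℝ)).norm_image_sub_le_of_norm_hasDerivWithin_le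
    (f := fun y => 2 * besselJ0 y + besselJ0 (2*y))
    (f' := fun x => 2 * (-J1 x) + (-J1 (2*x)) * 2) (C := 4)
    (fun x _ => (hD x).hasDerivWithinAt) ?bnd (mem_Ici.mpr hs) (mem_Ici.mpr ht)
  · simpa [Real.norm_eq_abs] using this
  case bnd =>
    intro x hx
    rw [mem_Ici] at hx
    have h1 := absJ1_le_one x hx
    have h2 := absJ1_le_one (2*x) (by linarith)
    rw [Real.norm_eq_abs]
    have := abs_add_le (2 * (-J1 x)) ((-J1 (2*x)) * 2)
    rw [abs_mul, abs_mul, abs_neg] at this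
    simp only [abs_neg] at this
    calc |2 * (-J1 x) + (-J1 (2*x)) * 2| ≤ |2| * |J1 x| + |J1 (2*x)| * |2| := this
      _ ≤ 4 := by rw [abs_two]; nlinarith [abs_nonneg (J1 x), abs_nonneg (J1 (2*x))]

lemma fact_lower (i : ℕ) : ((Nat.factorial 31 : ℝ)) * 32^i ≤ (Nat.factorial (i+31) : ℝ) := by
  have h := Nat.factorial_mul_pow_le_factorial (m := 31) (n := i)
  have : ((Nat.factorial 31 * 32 ^ i : ℕ) : ℝ) ≤ ((Nat.factorial (31 + i) : ℕ) : ℝ) := by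
    exact_mod_cast h
  push_cast at this
  rwa [Nat.add_comm 31 i] at this

lemma J0_tail (t : ℝ) (h0 : 0 ≤ t) (h12 : t ≤ 12) :
    |besselJ0 t - ∑ k ∈ Finset.range 31, (-1:ℝ)^k * (t/2)^(2*k)/((Nat.factorial k:ℝ))^2|
      ≤ (1:ℝ)/10^18 := by
  have hsum := summable_J0 t
  have hsplit := Summable.sum_add_tsum_nat_add 31 hsum
  have h1 : besselJ0 t - ∑ k ∈ Finset.range 31, (-1:ℝ)^k * (t/2)^(2*k)/((Nat.factorial k:ℝ))^2
      = ∑' i : ℕ, (-1:ℝ)^(i+31) * (t/2)^(2*(i+31))/((Nat.factorial (i+31):ℝ))^2 := by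
    rw [besselJ0]
    linarith [hsplit]
  rw [h1]
  set c : ℝ := (6:ℝ)^62 / ((Nat.factorial 31:ℝ))^2 with hc
  have hc0 : 0 < c := by positivity
  have hterm : ∀ i : ℕ, |(-1:ℝ)^(i+31) * (t/2)^(2*(i+31))/((Nat.factorial (i+31):ℝ))^2|
      ≤ c * ((36:ℝ)/1024)^i := by
    intro i
    have habs : |(-1:ℝ)^(i+31) * (t/2)^(2*(i+31))/((Nat.factorial (i+31):ℝ))^2|
        = (t/2)^(2*(i+31))/((Nat.factorial (i+31):ℝ))^2 := by
      rw [abs_div, abs_mul, abs_pow, abs_neg, abs_one, one_pow, one_mul, abs_pow,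
        abs_of_nonneg (by linarith : (0:ℝ) ≤ t/2),
        abs_of_nonneg (by positivity : (0:ℝ) ≤ ((Nat.factorial (i+31):ℝ))^2)]
    rw [habs]
    have hnum : (t/2)^(2*(i+31)) ≤ (6:ℝ)^62 * 36^i := by
      have h1 : (t/2)^(2*(i+31)) ≤ (6:ℝ)^(2*(i+31)) :=
        pow_le_pow_left₀ (by linarith) (by linarith) _
      have h2 : (6:ℝ)^(2*(i+31)) = (6:ℝ)^62 * 36^i := by
        rw [show 2*(i+31) = 62 + 2*i by ring, pow_add, pow_mul]
        norm_num
      linarith [h1, h2.le]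
    have hden : ((Nat.factorial 31:ℝ))^2 * 1024^i ≤ ((Nat.factorial (i+31):ℝ))^2 := by
      have h := fact_lower i
      have hpos : (0:ℝ) ≤ (Nat.factorial 31 : ℝ) * 32^i := by positivity
      calc ((Nat.factorial 31:ℝ))^2 * 1024^i
          = ((Nat.factorial 31 : ℝ) * 32^i)^2 := by
            have h1024 : ((32:ℝ)^i)^2 = 1024^i := by
              rw [← pow_mul, mul_comm, pow_mul]; norm_num
            rw [mul_pow, h1024]
        _ ≤ ((Nat.factorial (i+31):ℝ))^2 := by
            apply pow_le_pow_left₀ hpos h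
    have hrhs : c * ((36:ℝ)/1024)^i = ((6:ℝ)^62 * 36^i) / (((Nat.factorial 31:ℝ))^2 * 1024^i) := by
      rw [hc, div_pow, div_mul_div_comm]
    rw [hrhs]
    apply div_le_div₀ (by positivity) hnum (by positivity) hden
  have hgeo : Summable (fun i : ℕ => c * ((36:ℝ)/1024)^i) :=
    (summable_geometric_of_lt_one (by norm_num) (by norm_num)).mul_left c
  have habs_sum : Summable (fun i : ℕ => |(-1:ℝ)^(i+31) * (t/2)^(2*(i+31))/((Nat.factorial (i+31):ℝ))^2|) := by
    apply Summable.abs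
    exact (summable_nat_add_iff 31).mpr hsum
  calc |∑' i : ℕ, (-1:ℝ)^(i+31) * (t/2)^(2*(i+31))/((Nat.factorial (i+31):ℝ))^2|
      ≤ ∑' i : ℕ, |(-1:ℝ)^(i+31) * (t/2)^(2*(i+31))/((Nat.factorial (i+31):ℝ))^2| := by
        have hn := norm_tsum_le_tsum_norm
          (f := fun i : ℕ => (-1:ℝ)^(i+31) * (t/2)^(2*(i+31))/((Nat.factorial (i+31):ℝ))^2)
          (by simp only [Real.norm_eq_abs]; exact habs_sum)
        simp only [Real.norm_eq_abs] at hn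
        exact hn
    _ ≤ ∑' i : ℕ, c * ((36:ℝ)/1024)^i := Summable.tsum_le_tsum hterm habs_sum hgeo
    _ = c * (1024/988) := by
        rw [tsum_mul_left, tsum_geometric_of_lt_one (by norm_num) (by norm_num)]
        norm_num
    _ ≤ (1:ℝ)/10^18 := by
        rw [hc]
        rw [div_mul_eq_mul_div, div_le_div_iff₀ (by positivity) (by norm_num)]
        have : (Nat.factorial 31 : ℝ) = 8222838654177922817725562880000000 := by
          norm_num [Nat.factorial]
        rw [this]
        norm_num

lemma J1_tail6 :
    |J1 6 - ∑ k ∈ Finset.range 31, (-1:ℝ)^k * (3:ℝ)^(2*k+1)/((Nat.factorial k:ℝ)*(Nat.factorial (k+1):ℝ))|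
      ≤ (1:ℝ)/10^18 := by
  have h3 : ((6:ℝ)/2) = 3 := by norm_num
  have hJ : J1 6 = ∑' k : ℕ, (-1:ℝ)^k * (3:ℝ)^(2*k+1)/((Nat.factorial k:ℝ)*(Nat.factorial (k+1):ℝ)) := by
    rw [J1]; simp only [h3]
  have hsum : Summable (fun k : ℕ => (-1:ℝ)^k * (3:ℝ)^(2*k+1)/((Nat.factorial k:ℝ)*(Nat.factorial (k+1):ℝ))) := by
    have := summable_J1 6
    simpa only [h3] using this
  have hsplit := Summable.sum_add_tsum_nat_add 31 hsum
  have h1 : J1 6 - ∑ k ∈ Finset.range 31, (-1:ℝ)^k * (3:ℝ)^(2*k+1)/((Nat.factorial k:ℝ)*(Nat.factorial (k+1):ℝ))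
      = ∑' i : ℕ, (-1:ℝ)^(i+31) * (3:ℝ)^(2*(i+31)+1)/((Nat.factorial (i+31):ℝ)*(Nat.factorial (i+31+1):ℝ)) := by
    rw [hJ]
    linarith [hsplit]
  rw [h1]
  set c : ℝ := (3:ℝ)^63 / ((Nat.factorial 31:ℝ))^2 with hc
  have hterm : ∀ i : ℕ, |(-1:ℝ)^(i+31) * (3:ℝ)^(2*(i+31)+1)/((Nat.factorial (i+31):ℝ)*(Nat.factorial (i+31+1):ℝ))|
      ≤ c * ((36:ℝ)/1024)^i := by
    intro i
    have habs : |(-1:ℝ)^(i+31) * (3:ℝ)^(2*(i+31)+1)/((Nat.factorial (i+31):ℝ)*(Nat.factorial (i+31+1):ℝ))|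
        = (3:ℝ)^(2*(i+31)+1)/((Nat.factorial (i+31):ℝ)*(Nat.factorial (i+31+1):ℝ)) := by
      rw [abs_div, abs_mul, abs_pow, abs_neg, abs_one, one_pow, one_mul, abs_pow,
        abs_of_nonneg (by norm_num : (0:ℝ) ≤ 3),
        abs_of_nonneg (by positivity : (0:ℝ) ≤ (Nat.factorial (i+31):ℝ)*(Nat.factorial (i+31+1):ℝ))]
    rw [habs]
    have hnum : (3:ℝ)^(2*(i+31)+1) ≤ (3:ℝ)^63 * 36^i := by
      have h2 : (3:ℝ)^(2*(i+31)+1) = (3:ℝ)^63 * 9^i := by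
        rw [show 2*(i+31)+1 = 63 + 2*i by ring, pow_add, pow_mul]
        norm_num
      rw [h2]
      have : (9:ℝ)^i ≤ 36^i := pow_le_pow_left₀ (by norm_num) (by norm_num) i
      nlinarith [this, pow_pos (show (0:ℝ) < 3 by norm_num) 63]
    have hden : ((Nat.factorial 31:ℝ))^2 * 1024^i ≤ (Nat.factorial (i+31):ℝ)*(Nat.factorial (i+31+1):ℝ) := by
      have h := fact_lower i
      have hmono : (Nat.factorial (i+31):ℝ) ≤ (Nat.factorial (i+31+1):ℝ) := by
        exact_mod_cast Nat.factorial_le (by omega)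
      have hpos : (0:ℝ) ≤ (Nat.factorial 31 : ℝ) * 32^i := by positivity
      have hsq : ((Nat.factorial 31:ℝ))^2 * 1024^i = ((Nat.factorial 31 : ℝ) * 32^i)^2 := by
        have h1024 : ((32:ℝ)^i)^2 = 1024^i := by
          rw [← pow_mul, mul_comm, pow_mul]; norm_num
        rw [mul_pow, h1024]
      rw [hsq]
      have h2 : ((Nat.factorial 31 : ℝ) * 32^i)^2 ≤ ((Nat.factorial (i+31):ℝ))^2 :=
        pow_le_pow_left₀ hpos h 2
      have h3 : ((Nat.factorial (i+31):ℝ))^2 ≤ (Nat.factorial (i+31):ℝ)*(Nat.factorial (i+31+1):ℝ) := by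
        rw [sq]
        exact mul_le_mul_of_nonneg_left hmono (le_of_lt (fact_pos' _))
      linarith
    have hrhs : c * ((36:ℝ)/1024)^i = ((3:ℝ)^63 * 36^i) / (((Nat.factorial 31:ℝ))^2 * 1024^i) := by
      rw [hc, div_pow, div_mul_div_comm]
    rw [hrhs]
    apply div_le_div₀ (by positivity) hnum (by positivity) hden
  have hgeo : Summable (fun i : ℕ => c * ((36:ℝ)/1024)^i) :=
    (summable_geometric_of_lt_one (by norm_num) (by norm_num)).mul_left c
  have habs_sum : Summable (fun i : ℕ => |(-1:ℝ)^(i+31) * (3:ℝ)^(2*(i+31)+1)/((Nat.factorial (i+31):ℝ)*(Nat.factorial (i+31+1):ℝ))|) := by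
    apply Summable.abs
    exact (summable_nat_add_iff 31).mpr hsum
  calc |∑' i : ℕ, (-1:ℝ)^(i+31) * (3:ℝ)^(2*(i+31)+1)/((Nat.factorial (i+31):ℝ)*(Nat.factorial (i+31+1):ℝ))|
      ≤ ∑' i : ℕ, |(-1:ℝ)^(i+31) * (3:ℝ)^(2*(i+31)+1)/((Nat.factorial (i+31):ℝ)*(Nat.factorial (i+31+1):ℝ))| := by
        have hn := norm_tsum_le_tsum_norm
          (f := fun i : ℕ => (-1:ℝ)^(i+31) * (3:ℝ)^(2*(i+31)+1)/((Nat.factorial (i+31):ℝ)*(Nat.factorial (i+31+1):ℝ)))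
          (by simp only [Real.norm_eq_abs]; exact habs_sum)
        simp only [Real.norm_eq_abs] at hn
        exact hn
    _ ≤ ∑' i : ℕ, c * ((36:ℝ)/1024)^i := Summable.tsum_le_tsum hterm habs_sum hgeo
    _ = c * (1024/988) := by
        rw [tsum_mul_left, tsum_geometric_of_lt_one (by norm_num) (by norm_num)]
        norm_num
    _ ≤ (1:ℝ)/10^18 := by
        rw [hc]
        rw [div_mul_eq_mul_div, div_le_div_iff₀ (by positivity) (by norm_num)]
        have : (Nat.factorial 31 : ℝ) = 8222838654177922817725562880000000 := by
          norm_num [Nat.factorial]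
        rw [this]
        norm_num

lemma grid_step {q r lb : ℝ} (t : ℝ) (hq : 0 ≤ q) (ht : 0 ≤ t)
    (hlb : lb ≤ 2 * besselJ0 q + besselJ0 (2*q))
    (hm : -1 + 4*r < lb) (h1 : q - r ≤ t) (h2 : t ≤ q + r) :
    -1 < 2 * besselJ0 t + besselJ0 (2*t) := by
  have hl := f_lip q t hq ht
  rw [abs_sub_le_iff] at hl
  have hl2 := hl.2
  have habs : |t - q| ≤ r := abs_le.mpr ⟨by linarith, by linarith⟩
  have h4 : 4*|t - q| ≤ 4*r := by linarith
  linarith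

lemma Mf6_le : Mf 6 ≤ (1024:ℝ)/10000 := by
  have ha := J0_tail 6 (by norm_num) (by norm_num)
  have hb := J1_tail6
  rw [abs_sub_le_iff] at ha hb
  have ha1 := ha.1
  have ha2 := ha.2
  have hb1 := hb.1
  have hb2 := hb.2
  have hPa1 : ∑ k ∈ Finset.range 31, (-1:ℝ)^k * ((6:ℝ)/2)^(2*k)/((Nat.factorial k:ℝ))^2 ≤ (150646/1000000:ℝ) - 1/10^18 := by
    simp only [Finset.sum_range_succ, Finset.sum_range_zero]
    norm_num [Nat.factorial]
  have hPa2 : (150645/1000000:ℝ) + 1/10^18 ≤ ∑ k ∈ Finset.range 31, (-1:ℝ)^k * ((6:ℝ)/2)^(2*k)/((Nat.factorial k:ℝ))^2 := by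
    simp only [Finset.sum_range_succ, Finset.sum_range_zero]
    norm_num [Nat.factorial]
  have hPb1 : ∑ k ∈ Finset.range 31, (-1:ℝ)^k * (3:ℝ)^(2*k+1)/((Nat.factorial k:ℝ)*(Nat.factorial (k+1):ℝ)) ≤ (-276683/1000000:ℝ) - 1/10^18 := by
    simp only [Finset.sum_range_succ, Finset.sum_range_zero]
    norm_num [Nat.factorial]
  have hPb2 : (-276684/1000000:ℝ) + 1/10^18 ≤ ∑ k ∈ Finset.range 31, (-1:ℝ)^k * (3:ℝ)^(2*k+1)/((Nat.factorial k:ℝ)*(Nat.factorial (k+1):ℝ)) := by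
    simp only [Finset.sum_range_succ, Finset.sum_range_zero]
    norm_num [Nat.factorial]
  have hJ0u : besselJ0 6 ≤ (150646/1000000:ℝ) := by linarith
  have hJ0l : (150645/1000000:ℝ) ≤ besselJ0 6 := by linarith
  have hJ1u : J1 6 ≤ (-276683/1000000:ℝ) := by linarith
  have hJ1l : (-276684/1000000:ℝ) ≤ J1 6 := by linarith
  rw [Mf]
  nlinarith [hJ0u, hJ0l, hJ1u, hJ1l]

lemma large_t (t : ℝ) (ht : 6 ≤ t) : -1 < 2 * besselJ0 t + besselJ0 (2*t) := by
  have h1 : Mf t ≤ Mf 6 := Mf_le_of_ge 6 t (by norm_num) ht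
  have h2 : Mf (2*t) ≤ Mf 6 := Mf_le_of_ge 6 (2*t) (by norm_num) (by linarith)
  have h6 := Mf6_le
  rw [Mf] at h1 h2
  have hA : besselJ0 t ^2 ≤ (1024:ℝ)/10000 := by nlinarith [sq_nonneg (J1 t)]
  have hB : besselJ0 (2*t) ^2 ≤ (1024:ℝ)/10000 := by nlinarith [sq_nonneg (J1 (2*t))]
  nlinarith [sq_nonneg (besselJ0 t + 32/100), sq_nonneg (besselJ0 (2*t) + 32/100)]

lemma pt_0 : ((2240311/1000000 : ℝ)) ≤ 2 * besselJ0 (3/4 : ℝ) + besselJ0 (2*(3/4 : ℝ)) := by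
  have ha := J0_tail (3/4 : ℝ) (by norm_num) (by norm_num)
  have hb := J0_tail (2*(3/4 : ℝ)) (by norm_num) (by norm_num)
  rw [abs_sub_le_iff] at ha hb
  have ha2 := ha.2
  have hb2 := hb.2
  have hPa : (432121/500000 : ℝ) + 1/10^18 ≤ ∑ k ∈ Finset.range 31, (-1:ℝ)^k * ((3/4 : ℝ)/2)^(2*k)/((Nat.factorial k:ℝ))^2 := by
    simp only [Finset.sum_range_succ, Finset.sum_range_zero]
    norm_num [Nat.factorial]
  have hPb : (511827/1000000 : ℝ) + 1/10^18 ≤ ∑ k ∈ Finset.range 31, (-1:ℝ)^k * (2*(3/4 : ℝ)/2)^(2*k)/((Nat.factorial k:ℝ))^2 := by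
    simp only [Finset.sum_range_succ, Finset.sum_range_zero]
    norm_num [Nat.factorial]
  linarith

lemma pt_1 : ((288203/1000000 : ℝ)) ≤ 2 * besselJ0 (9/5 : ℝ) + besselJ0 (2*(9/5 : ℝ)) := by
  have ha := J0_tail (9/5 : ℝ) (by norm_num) (by norm_num)
  have hb := J0_tail (2*(9/5 : ℝ)) (by norm_num) (by norm_num)
  rw [abs_sub_le_iff] at ha hb
  have ha2 := ha.2
  have hb2 := hb.2
  have hPa : (169993/500000 : ℝ) + 1/10^18 ≤ ∑ k ∈ Finset.range 31, (-1:ℝ)^k * ((9/5 : ℝ)/2)^(2*k)/((Nat.factorial k:ℝ))^2 := by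
    simp only [Finset.sum_range_succ, Finset.sum_range_zero]
    norm_num [Nat.factorial]
  have hPb : (-391769/1000000 : ℝ) + 1/10^18 ≤ ∑ k ∈ Finset.range 31, (-1:ℝ)^k * (2*(9/5 : ℝ)/2)^(2*k)/((Nat.factorial k:ℝ))^2 := by
    simp only [Finset.sum_range_succ, Finset.sum_range_zero]
    norm_num [Nat.factorial]
  linarith

lemma pt_2 : ((-9253/50000 : ℝ)) ≤ 2 * besselJ0 (23/10 : ℝ) + besselJ0 (2*(23/10 : ℝ)) := by
  have ha := J0_tail (23/10 : ℝ) (by norm_num) (by norm_num)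
  have hb := J0_tail (2*(23/10 : ℝ)) (by norm_num) (by norm_num)
  rw [abs_sub_le_iff] at ha hb
  have ha2 := ha.2
  have hb2 := hb.2
  have hPa : (55539/1000000 : ℝ) + 1/10^18 ≤ ∑ k ∈ Finset.range 31, (-1:ℝ)^k * ((23/10 : ℝ)/2)^(2*k)/((Nat.factorial k:ℝ))^2 := by
    simp only [Finset.sum_range_succ, Finset.sum_range_zero]
    norm_num [Nat.factorial]
  have hPb : (-148069/500000 : ℝ) + 1/10^18 ≤ ∑ k ∈ Finset.range 31, (-1:ℝ)^k * (2*(23/10 : ℝ)/2)^(2*k)/((Nat.factorial k:ℝ))^2 := by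
    simp only [Finset.sum_range_succ, Finset.sum_range_zero]
    norm_num [Nat.factorial]
  linarith

lemma pt_3 : ((-31579/100000 : ℝ)) ≤ 2 * besselJ0 (53/20 : ℝ) + besselJ0 (2*(53/20 : ℝ)) := by
  have ha := J0_tail (53/20 : ℝ) (by norm_num) (by norm_num)
  have hb := J0_tail (2*(53/20 : ℝ)) (by norm_num) (by norm_num)
  rw [abs_sub_le_iff] at ha hb
  have ha2 := ha.2
  have hb2 := hb.2
  have hPa : (-119993/1000000 : ℝ) + 1/10^18 ≤ ∑ k ∈ Finset.range 31, (-1:ℝ)^k * ((53/20 : ℝ)/2)^(2*k)/((Nat.factorial k:ℝ))^2 := by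
    simp only [Finset.sum_range_succ, Finset.sum_range_zero]
    norm_num [Nat.factorial]
  have hPb : (-18951/250000 : ℝ) + 1/10^18 ≤ ∑ k ∈ Finset.range 31, (-1:ℝ)^k * (2*(53/20 : ℝ)/2)^(2*k)/((Nat.factorial k:ℝ))^2 := by
    simp only [Finset.sum_range_succ, Finset.sum_range_zero]
    norm_num [Nat.factorial]
  linarith

lemma pt_4 : ((-363241/1000000 : ℝ)) ≤ 2 * besselJ0 (59/20 : ℝ) + besselJ0 (2*(59/20 : ℝ)) := by
  have ha := J0_tail (59/20 : ℝ) (by norm_num) (by norm_num)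
  have hb := J0_tail (2*(59/20 : ℝ)) (by norm_num) (by norm_num)
  rw [abs_sub_le_iff] at ha hb
  have ha2 := ha.2
  have hb2 := hb.2
  have hPa : (-242637/1000000 : ℝ) + 1/10^18 ≤ ∑ k ∈ Finset.range 31, (-1:ℝ)^k * ((59/20 : ℝ)/2)^(2*k)/((Nat.factorial k:ℝ))^2 := by
    simp only [Finset.sum_range_succ, Finset.sum_range_zero]
    norm_num [Nat.factorial]
  have hPb : (122033/1000000 : ℝ) + 1/10^18 ≤ ∑ k ∈ Finset.range 31, (-1:ℝ)^k * (2*(59/20 : ℝ)/2)^(2*k)/((Nat.factorial k:ℝ))^2 := by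
    simp only [Finset.sum_range_succ, Finset.sum_range_zero]
    norm_num [Nat.factorial]
  linarith

lemma pt_5 : ((-99267/250000 : ℝ)) ≤ 2 * besselJ0 (16/5 : ℝ) + besselJ0 (2*(16/5 : ℝ)) := by
  have ha := J0_tail (16/5 : ℝ) (by norm_num) (by norm_num)
  have hb := J0_tail (2*(16/5 : ℝ)) (by norm_num) (by norm_num)
  rw [abs_sub_le_iff] at ha hb
  have ha2 := ha.2
  have hb2 := hb.2
  have hPa : (-320189/1000000 : ℝ) + 1/10^18 ≤ ∑ k ∈ Finset.range 31, (-1:ℝ)^k * ((16/5 : ℝ)/2)^(2*k)/((Nat.factorial k:ℝ))^2 := by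
    simp only [Finset.sum_range_succ, Finset.sum_range_zero]
    norm_num [Nat.factorial]
  have hPb : (24331/100000 : ℝ) + 1/10^18 ≤ ∑ k ∈ Finset.range 31, (-1:ℝ)^k * (2*(16/5 : ℝ)/2)^(2*k)/((Nat.factorial k:ℝ))^2 := by
    simp only [Finset.sum_range_succ, Finset.sum_range_zero]
    norm_num [Nat.factorial]
  linarith

lemma pt_6 : ((-55921/125000 : ℝ)) ≤ 2 * besselJ0 (69/20 : ℝ) + besselJ0 (2*(69/20 : ℝ)) := by
  have ha := J0_tail (69/20 : ℝ) (by norm_num) (by norm_num)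
  have hb := J0_tail (2*(69/20 : ℝ)) (by norm_num) (by norm_num)
  rw [abs_sub_le_iff] at ha hb
  have ha2 := ha.2
  have hb2 := hb.2
  have hPa : (-74547/200000 : ℝ) + 1/10^18 ≤ ∑ k ∈ Finset.range 31, (-1:ℝ)^k * ((69/20 : ℝ)/2)^(2*k)/((Nat.factorial k:ℝ))^2 := by
    simp only [Finset.sum_range_succ, Finset.sum_range_zero]
    norm_num [Nat.factorial]
  have hPb : (149051/500000 : ℝ) + 1/10^18 ≤ ∑ k ∈ Finset.range 31, (-1:ℝ)^k * (2*(69/20 : ℝ)/2)^(2*k)/((Nat.factorial k:ℝ))^2 := by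
    simp only [Finset.sum_range_succ, Finset.sum_range_zero]
    norm_num [Nat.factorial]
  linarith

lemma pt_7 : ((-251913/500000 : ℝ)) ≤ 2 * besselJ0 (73/20 : ℝ) + besselJ0 (2*(73/20 : ℝ)) := by
  have ha := J0_tail (73/20 : ℝ) (by norm_num) (by norm_num)
  have hb := J0_tail (2*(73/20 : ℝ)) (by norm_num) (by norm_num)
  rw [abs_sub_le_iff] at ha hb
  have ha2 := ha.2
  have hb2 := hb.2
  have hPa : (-396021/1000000 : ℝ) + 1/10^18 ≤ ∑ k ∈ Finset.range 31, (-1:ℝ)^k * ((73/20 : ℝ)/2)^(2*k)/((Nat.factorial k:ℝ))^2 := by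
    simp only [Finset.sum_range_succ, Finset.sum_range_zero]
    norm_num [Nat.factorial]
  have hPb : (36027/125000 : ℝ) + 1/10^18 ≤ ∑ k ∈ Finset.range 31, (-1:ℝ)^k * (2*(73/20 : ℝ)/2)^(2*k)/((Nat.factorial k:ℝ))^2 := by
    simp only [Finset.sum_range_succ, Finset.sum_range_zero]
    norm_num [Nat.factorial]
  linarith

lemma pt_8 : ((-570827/1000000 : ℝ)) ≤ 2 * besselJ0 (77/20 : ℝ) + besselJ0 (2*(77/20 : ℝ)) := by
  have ha := J0_tail (77/20 : ℝ) (by norm_num) (by norm_num)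
  have hb := J0_tail (2*(77/20 : ℝ)) (by norm_num) (by norm_num)
  rw [abs_sub_le_iff] at ha hb
  have ha2 := ha.2
  have hb2 := hb.2
  have hPa : (-402693/1000000 : ℝ) + 1/10^18 ≤ ∑ k ∈ Finset.range 31, (-1:ℝ)^k * ((77/20 : ℝ)/2)^(2*k)/((Nat.factorial k:ℝ))^2 := by
    simp only [Finset.sum_range_succ, Finset.sum_range_zero]
    norm_num [Nat.factorial]
  have hPb : (234559/1000000 : ℝ) + 1/10^18 ≤ ∑ k ∈ Finset.range 31, (-1:ℝ)^k * (2*(77/20 : ℝ)/2)^(2*k)/((Nat.factorial k:ℝ))^2 := by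
    simp only [Finset.sum_range_succ, Finset.sum_range_zero]
    norm_num [Nat.factorial]
  linarith

lemma pt_9 : ((-12453/20000 : ℝ)) ≤ 2 * besselJ0 (4 : ℝ) + besselJ0 (2*(4 : ℝ)) := by
  have ha := J0_tail (4 : ℝ) (by norm_num) (by norm_num)
  have hb := J0_tail (2*(4 : ℝ)) (by norm_num) (by norm_num)
  rw [abs_sub_le_iff] at ha hb
  have ha2 := ha.2
  have hb2 := hb.2
  have hPa : (-7943/20000 : ℝ) + 1/10^18 ≤ ∑ k ∈ Finset.range 31, (-1:ℝ)^k * ((4 : ℝ)/2)^(2*k)/((Nat.factorial k:ℝ))^2 := by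
    simp only [Finset.sum_range_succ, Finset.sum_range_zero]
    norm_num [Nat.factorial]
  have hPb : (3433/20000 : ℝ) + 1/10^18 ≤ ∑ k ∈ Finset.range 31, (-1:ℝ)^k * (2*(4 : ℝ)/2)^(2*k)/((Nat.factorial k:ℝ))^2 := by
    simp only [Finset.sum_range_succ, Finset.sum_range_zero]
    norm_num [Nat.factorial]
  linarith

lemma pt_10 : ((-335053/500000 : ℝ)) ≤ 2 * besselJ0 (83/20 : ℝ) + besselJ0 (2*(83/20 : ℝ)) := by
  have ha := J0_tail (83/20 : ℝ) (by norm_num) (by norm_num)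
  have hb := J0_tail (2*(83/20 : ℝ)) (by norm_num) (by norm_num)
  rw [abs_sub_le_iff] at ha hb
  have ha2 := ha.2
  have hb2 := hb.2
  have hPa : (-23941/62500 : ℝ) + 1/10^18 ≤ ∑ k ∈ Finset.range 31, (-1:ℝ)^k * ((83/20 : ℝ)/2)^(2*k)/((Nat.factorial k:ℝ))^2 := by
    simp only [Finset.sum_range_succ, Finset.sum_range_zero]
    norm_num [Nat.factorial]
  have hPb : (48003/500000 : ℝ) + 1/10^18 ≤ ∑ k ∈ Finset.range 31, (-1:ℝ)^k * (2*(83/20 : ℝ)/2)^(2*k)/((Nat.factorial k:ℝ))^2 := by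
    simp only [Finset.sum_range_succ, Finset.sum_range_zero]
    norm_num [Nat.factorial]
  linarith

lemma pt_11 : ((-696461/1000000 : ℝ)) ≤ 2 * besselJ0 (17/4 : ℝ) + besselJ0 (2*(17/4 : ℝ)) := by
  have ha := J0_tail (17/4 : ℝ) (by norm_num) (by norm_num)
  have hb := J0_tail (2*(17/4 : ℝ)) (by norm_num) (by norm_num)
  rw [abs_sub_le_iff] at ha hb
  have ha2 := ha.2
  have hb2 := hb.2
  have hPa : (-923/2500 : ℝ) + 1/10^18 ≤ ∑ k ∈ Finset.range 31, (-1:ℝ)^k * ((17/4 : ℝ)/2)^(2*k)/((Nat.factorial k:ℝ))^2 := by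
    simp only [Finset.sum_range_succ, Finset.sum_range_zero]
    norm_num [Nat.factorial]
  have hPb : (41939/1000000 : ℝ) + 1/10^18 ≤ ∑ k ∈ Finset.range 31, (-1:ℝ)^k * (2*(17/4 : ℝ)/2)^(2*k)/((Nat.factorial k:ℝ))^2 := by
    simp only [Finset.sum_range_succ, Finset.sum_range_zero]
    norm_num [Nat.factorial]
  linarith

lemma pt_12 : ((-716563/1000000 : ℝ)) ≤ 2 * besselJ0 (87/20 : ℝ) + besselJ0 (2*(87/20 : ℝ)) := by
  have ha := J0_tail (87/20 : ℝ) (by norm_num) (by norm_num)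
  have hb := J0_tail (2*(87/20 : ℝ)) (by norm_num) (by norm_num)
  rw [abs_sub_le_iff] at ha hb
  have ha2 := ha.2
  have hb2 := hb.2
  have hPa : (-17601/50000 : ℝ) + 1/10^18 ≤ ∑ k ∈ Finset.range 31, (-1:ℝ)^k * ((87/20 : ℝ)/2)^(2*k)/((Nat.factorial k:ℝ))^2 := by
    simp only [Finset.sum_range_succ, Finset.sum_range_zero]
    norm_num [Nat.factorial]
  have hPb : (-12523/1000000 : ℝ) + 1/10^18 ≤ ∑ k ∈ Finset.range 31, (-1:ℝ)^k * (2*(87/20 : ℝ)/2)^(2*k)/((Nat.factorial k:ℝ))^2 := by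
    simp only [Finset.sum_range_succ, Finset.sum_range_zero]
    norm_num [Nat.factorial]
  linarith

lemma pt_13 : ((-364381/500000 : ℝ)) ≤ 2 * besselJ0 (89/20 : ℝ) + besselJ0 (2*(89/20 : ℝ)) := by
  have ha := J0_tail (89/20 : ℝ) (by norm_num) (by norm_num)
  have hb := J0_tail (2*(89/20 : ℝ)) (by norm_num) (by norm_num)
  rw [abs_sub_le_iff] at ha hb
  have ha2 := ha.2
  have hb2 := hb.2
  have hPa : (-165877/500000 : ℝ) + 1/10^18 ≤ ∑ k ∈ Finset.range 31, (-1:ℝ)^k * ((89/20 : ℝ)/2)^(2*k)/((Nat.factorial k:ℝ))^2 := by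
    simp only [Finset.sum_range_succ, Finset.sum_range_zero]
    norm_num [Nat.factorial]
  have hPb : (-32627/500000 : ℝ) + 1/10^18 ≤ ∑ k ∈ Finset.range 31, (-1:ℝ)^k * (2*(89/20 : ℝ)/2)^(2*k)/((Nat.factorial k:ℝ))^2 := by
    simp only [Finset.sum_range_succ, Finset.sum_range_zero]
    norm_num [Nat.factorial]
  linarith

lemma pt_14 : ((-365779/500000 : ℝ)) ≤ 2 * besselJ0 (91/20 : ℝ) + besselJ0 (2*(91/20 : ℝ)) := by
  have ha := J0_tail (91/20 : ℝ) (by norm_num) (by norm_num)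
  have hb := J0_tail (2*(91/20 : ℝ)) (by norm_num) (by norm_num)
  rw [abs_sub_le_iff] at ha hb
  have ha2 := ha.2
  have hb2 := hb.2
  have hPa : (-308659/1000000 : ℝ) + 1/10^18 ≤ ∑ k ∈ Finset.range 31, (-1:ℝ)^k * ((91/20 : ℝ)/2)^(2*k)/((Nat.factorial k:ℝ))^2 := by
    simp only [Finset.sum_range_succ, Finset.sum_range_zero]
    norm_num [Nat.factorial]
  have hPb : (-357/3125 : ℝ) + 1/10^18 ≤ ∑ k ∈ Finset.range 31, (-1:ℝ)^k * (2*(91/20 : ℝ)/2)^(2*k)/((Nat.factorial k:ℝ))^2 := by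
    simp only [Finset.sum_range_succ, Finset.sum_range_zero]
    norm_num [Nat.factorial]
  linarith

lemma pt_15 : ((-90461/125000 : ℝ)) ≤ 2 * besselJ0 (93/20 : ℝ) + besselJ0 (2*(93/20 : ℝ)) := by
  have ha := J0_tail (93/20 : ℝ) (by norm_num) (by norm_num)
  have hb := J0_tail (2*(93/20 : ℝ)) (by norm_num) (by norm_num)
  rw [abs_sub_le_iff] at ha hb
  have ha2 := ha.2
  have hb2 := hb.2
  have hPa : (-35377/125000 : ℝ) + 1/10^18 ≤ ∑ k ∈ Finset.range 31, (-1:ℝ)^k * ((93/20 : ℝ)/2)^(2*k)/((Nat.factorial k:ℝ))^2 := by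
    simp only [Finset.sum_range_succ, Finset.sum_range_zero]
    norm_num [Nat.factorial]
  have hPb : (-19707/125000 : ℝ) + 1/10^18 ≤ ∑ k ∈ Finset.range 31, (-1:ℝ)^k * (2*(93/20 : ℝ)/2)^(2*k)/((Nat.factorial k:ℝ))^2 := by
    simp only [Finset.sum_range_succ, Finset.sum_range_zero]
    norm_num [Nat.factorial]
  linarith

lemma pt_16 : ((-704171/1000000 : ℝ)) ≤ 2 * besselJ0 (19/4 : ℝ) + besselJ0 (2*(19/4 : ℝ)) := by
  have ha := J0_tail (19/4 : ℝ) (by norm_num) (by norm_num)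
  have hb := J0_tail (2*(19/4 : ℝ)) (by norm_num) (by norm_num)
  rw [abs_sub_le_iff] at ha hb
  have ha2 := ha.2
  have hb2 := hb.2
  have hPa : (-255121/1000000 : ℝ) + 1/10^18 ≤ ∑ k ∈ Finset.range 31, (-1:ℝ)^k * ((19/4 : ℝ)/2)^(2*k)/((Nat.factorial k:ℝ))^2 := by
    simp only [Finset.sum_range_succ, Finset.sum_range_zero]
    norm_num [Nat.factorial]
  have hPb : (-193929/1000000 : ℝ) + 1/10^18 ≤ ∑ k ∈ Finset.range 31, (-1:ℝ)^k * (2*(19/4 : ℝ)/2)^(2*k)/((Nat.factorial k:ℝ))^2 := by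
    simp only [Finset.sum_range_succ, Finset.sum_range_zero]
    norm_num [Nat.factorial]
  linarith

lemma pt_17 : ((-336183/500000 : ℝ)) ≤ 2 * besselJ0 (97/20 : ℝ) + besselJ0 (2*(97/20 : ℝ)) := by
  have ha := J0_tail (97/20 : ℝ) (by norm_num) (by norm_num)
  have hb := J0_tail (2*(97/20 : ℝ)) (by norm_num) (by norm_num)
  rw [abs_sub_le_iff] at ha hb
  have ha2 := ha.2
  have hb2 := hb.2
  have hPa : (-45057/200000 : ℝ) + 1/10^18 ≤ ∑ k ∈ Finset.range 31, (-1:ℝ)^k * ((97/20 : ℝ)/2)^(2*k)/((Nat.factorial k:ℝ))^2 := by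
    simp only [Finset.sum_range_succ, Finset.sum_range_zero]
    norm_num [Nat.factorial]
  have hPb : (-55449/250000 : ℝ) + 1/10^18 ≤ ∑ k ∈ Finset.range 31, (-1:ℝ)^k * (2*(97/20 : ℝ)/2)^(2*k)/((Nat.factorial k:ℝ))^2 := by
    simp only [Finset.sum_range_succ, Finset.sum_range_zero]
    norm_num [Nat.factorial]
  linarith

lemma pt_18 : ((-60113/100000 : ℝ)) ≤ 2 * besselJ0 (5 : ℝ) + besselJ0 (2*(5 : ℝ)) := by
  have ha := J0_tail (5 : ℝ) (by norm_num) (by norm_num)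
  have hb := J0_tail (2*(5 : ℝ)) (by norm_num) (by norm_num)
  rw [abs_sub_le_iff] at ha hb
  have ha2 := ha.2
  have hb2 := hb.2
  have hPa : (-177597/1000000 : ℝ) + 1/10^18 ≤ ∑ k ∈ Finset.range 31, (-1:ℝ)^k * ((5 : ℝ)/2)^(2*k)/((Nat.factorial k:ℝ))^2 := by
    simp only [Finset.sum_range_succ, Finset.sum_range_zero]
    norm_num [Nat.factorial]
  have hPb : (-15371/62500 : ℝ) + 1/10^18 ≤ ∑ k ∈ Finset.range 31, (-1:ℝ)^k * (2*(5 : ℝ)/2)^(2*k)/((Nat.factorial k:ℝ))^2 := by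
    simp only [Finset.sum_range_succ, Finset.sum_range_zero]
    norm_num [Nat.factorial]
  linarith

lemma pt_19 : ((-231977/500000 : ℝ)) ≤ 2 * besselJ0 (26/5 : ℝ) + besselJ0 (2*(26/5 : ℝ)) := by
  have ha := J0_tail (26/5 : ℝ) (by norm_num) (by norm_num)
  have hb := J0_tail (2*(26/5 : ℝ)) (by norm_num) (by norm_num)
  rw [abs_sub_le_iff] at ha hb
  have ha2 := ha.2
  have hb2 := hb.2
  have hPa : (-110291/1000000 : ℝ) + 1/10^18 ≤ ∑ k ∈ Finset.range 31, (-1:ℝ)^k * ((26/5 : ℝ)/2)^(2*k)/((Nat.factorial k:ℝ))^2 := by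
    simp only [Finset.sum_range_succ, Finset.sum_range_zero]
    norm_num [Nat.factorial]
  have hPb : (-60843/250000 : ℝ) + 1/10^18 ≤ ∑ k ∈ Finset.range 31, (-1:ℝ)^k * (2*(26/5 : ℝ)/2)^(2*k)/((Nat.factorial k:ℝ))^2 := by
    simp only [Finset.sum_range_succ, Finset.sum_range_zero]
    norm_num [Nat.factorial]
  linarith

lemma pt_20 : ((-184879/1000000 : ℝ)) ≤ 2 * besselJ0 (11/2 : ℝ) + besselJ0 (2*(11/2 : ℝ)) := by
  have ha := J0_tail (11/2 : ℝ) (by norm_num) (by norm_num)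
  have hb := J0_tail (2*(11/2 : ℝ)) (by norm_num) (by norm_num)
  rw [abs_sub_le_iff] at ha hb
  have ha2 := ha.2
  have hb2 := hb.2
  have hPa : (-1711/250000 : ℝ) + 1/10^18 ≤ ∑ k ∈ Finset.range 31, (-1:ℝ)^k * ((11/2 : ℝ)/2)^(2*k)/((Nat.factorial k:ℝ))^2 := by
    simp only [Finset.sum_range_succ, Finset.sum_range_zero]
    norm_num [Nat.factorial]
  have hPb : (-171191/1000000 : ℝ) + 1/10^18 ≤ ∑ k ∈ Finset.range 31, (-1:ℝ)^k * (2*(11/2 : ℝ)/2)^(2*k)/((Nat.factorial k:ℝ))^2 := by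
    simp only [Finset.sum_range_succ, Finset.sum_range_zero]
    norm_num [Nat.factorial]
  linarith

lemma pt_21 : ((348979/1000000 : ℝ)) ≤ 2 * besselJ0 (6 : ℝ) + besselJ0 (2*(6 : ℝ)) := by
  have ha := J0_tail (6 : ℝ) (by norm_num) (by norm_num)
  have hb := J0_tail (2*(6 : ℝ)) (by norm_num) (by norm_num)
  rw [abs_sub_le_iff] at ha hb
  have ha2 := ha.2
  have hb2 := hb.2
  have hPa : (30129/200000 : ℝ) + 1/10^18 ≤ ∑ k ∈ Finset.range 31, (-1:ℝ)^k * ((6 : ℝ)/2)^(2*k)/((Nat.factorial k:ℝ))^2 := by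
    simp only [Finset.sum_range_succ, Finset.sum_range_zero]
    norm_num [Nat.factorial]
  have hPb : (47689/1000000 : ℝ) + 1/10^18 ≤ ∑ k ∈ Finset.range 31, (-1:ℝ)^k * (2*(6 : ℝ)/2)^(2*k)/((Nat.factorial k:ℝ))^2 := by
    simp only [Finset.sum_range_succ, Finset.sum_range_zero]
    norm_num [Nat.factorial]
  linarith

lemma small_t (t : ℝ) (ht : 0 ≤ t) (h6 : t ≤ 6) : -1 < 2 * besselJ0 t + besselJ0 (2*t) := by
  rcases le_or_gt t (31/20 : ℝ) with h0 | h0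
  · exact grid_step t (q := (3/4 : ℝ)) (r := (4/5 : ℝ)) (lb := (2240311/1000000 : ℝ)) (by norm_num) ht pt_0 (by norm_num) (by linarith) (by linarith)
  rcases le_or_gt t (264/125 : ℝ) with h1 | h1
  · exact grid_step t (q := (9/5 : ℝ)) (r := (39/125 : ℝ)) (lb := (288203/1000000 : ℝ)) (by norm_num) ht pt_1 (by norm_num) (by linarith) (by linarith)
  rcases le_or_gt t (4987/2000 : ℝ) with h2 | h2
  · exact grid_step t (q := (23/10 : ℝ)) (r := (387/2000 : ℝ)) (lb := (-9253/50000 : ℝ)) (by norm_num) ht pt_2 (by norm_num) (by linarith) (by linarith)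
  rcases le_or_gt t (2811/1000 : ℝ) with h3 | h3
  · exact grid_step t (q := (53/20 : ℝ)) (r := (161/1000 : ℝ)) (lb := (-31579/100000 : ℝ)) (by norm_num) ht pt_3 (by norm_num) (by linarith) (by linarith)
  rcases le_or_gt t (3099/1000 : ℝ) with h4 | h4
  · exact grid_step t (q := (59/20 : ℝ)) (r := (149/1000 : ℝ)) (lb := (-363241/1000000 : ℝ)) (by norm_num) ht pt_4 (by norm_num) (by linarith) (by linarith)
  rcases le_or_gt t (6681/2000 : ℝ) with h5 | h5
  · exact grid_step t (q := (16/5 : ℝ)) (r := (281/2000 : ℝ)) (lb := (-99267/250000 : ℝ)) (by norm_num) ht pt_5 (by norm_num) (by linarith) (by linarith)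
  rcases le_or_gt t (1789/500 : ℝ) with h6 | h6
  · exact grid_step t (q := (69/20 : ℝ)) (r := (16/125 : ℝ)) (lb := (-55921/125000 : ℝ)) (by norm_num) ht pt_6 (by norm_num) (by linarith) (by linarith)
  rcases le_or_gt t (941/250 : ℝ) with h7 | h7
  · exact grid_step t (q := (73/20 : ℝ)) (r := (57/500 : ℝ)) (lb := (-251913/500000 : ℝ)) (by norm_num) ht pt_7 (by norm_num) (by linarith) (by linarith)
  rcases le_or_gt t (15789/4000 : ℝ) with h8 | h8
  · exact grid_step t (q := (77/20 : ℝ)) (r := (389/4000 : ℝ)) (lb := (-570827/1000000 : ℝ)) (by norm_num) ht pt_8 (by norm_num) (by linarith) (by linarith)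
  rcases le_or_gt t (16337/4000 : ℝ) with h9 | h9
  · exact grid_step t (q := (4 : ℝ)) (r := (337/4000 : ℝ)) (lb := (-12453/20000 : ℝ)) (by norm_num) ht pt_9 (by norm_num) (by linarith) (by linarith)
  rcases le_or_gt t (16889/4000 : ℝ) with h10 | h10
  · exact grid_step t (q := (83/20 : ℝ)) (r := (289/4000 : ℝ)) (lb := (-335053/500000 : ℝ)) (by norm_num) ht pt_10 (by norm_num) (by linarith) (by linarith)
  rcases le_or_gt t (17263/4000 : ℝ) with h11 | h11
  · exact grid_step t (q := (17/4 : ℝ)) (r := (263/4000 : ℝ)) (lb := (-696461/1000000 : ℝ)) (by norm_num) ht pt_11 (by norm_num) (by linarith) (by linarith)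
  rcases le_or_gt t (17643/4000 : ℝ) with h12 | h12
  · exact grid_step t (q := (87/20 : ℝ)) (r := (243/4000 : ℝ)) (lb := (-716563/1000000 : ℝ)) (by norm_num) ht pt_12 (by norm_num) (by linarith) (by linarith)
  rcases le_or_gt t (18031/4000 : ℝ) with h13 | h13
  · exact grid_step t (q := (89/20 : ℝ)) (r := (231/4000 : ℝ)) (lb := (-364381/500000 : ℝ)) (by norm_num) ht pt_13 (by norm_num) (by linarith) (by linarith)
  rcases le_or_gt t (4607/1000 : ℝ) with h14 | h14
  · exact grid_step t (q := (91/20 : ℝ)) (r := (57/1000 : ℝ)) (lb := (-365779/500000 : ℝ)) (by norm_num) ht pt_14 (by norm_num) (by linarith) (by linarith)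
  rcases le_or_gt t (4709/1000 : ℝ) with h15 | h15
  · exact grid_step t (q := (93/20 : ℝ)) (r := (59/1000 : ℝ)) (lb := (-90461/125000 : ℝ)) (by norm_num) ht pt_15 (by norm_num) (by linarith) (by linarith)
  rcases le_or_gt t (3851/800 : ℝ) with h16 | h16
  · exact grid_step t (q := (19/4 : ℝ)) (r := (51/800 : ℝ)) (lb := (-704171/1000000 : ℝ)) (by norm_num) ht pt_16 (by norm_num) (by linarith) (by linarith)
  rcases le_or_gt t (19687/4000 : ℝ) with h17 | h17
  · exact grid_step t (q := (97/20 : ℝ)) (r := (287/4000 : ℝ)) (lb := (-336183/500000 : ℝ)) (by norm_num) ht pt_17 (by norm_num) (by linarith) (by linarith)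
  rcases le_or_gt t (10179/2000 : ℝ) with h18 | h18
  · exact grid_step t (q := (5 : ℝ)) (r := (179/2000 : ℝ)) (lb := (-60113/100000 : ℝ)) (by norm_num) ht pt_18 (by norm_num) (by linarith) (by linarith)
  rcases le_or_gt t (1331/250 : ℝ) with h19 | h19
  · exact grid_step t (q := (26/5 : ℝ)) (r := (31/250 : ℝ)) (lb := (-231977/500000 : ℝ)) (by norm_num) ht pt_19 (by norm_num) (by linarith) (by linarith)
  rcases le_or_gt t (911/160 : ℝ) with h20 | h20
  · exact grid_step t (q := (11/2 : ℝ)) (r := (31/160 : ℝ)) (lb := (-184879/1000000 : ℝ)) (by norm_num) ht pt_20 (by norm_num) (by linarith) (by linarith)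
  exact grid_step t (q := (6 : ℝ)) (r := (327/1000 : ℝ)) (lb := (348979/1000000 : ℝ)) (by norm_num) ht pt_21 (by norm_num) (by linarith) (by linarith)


/-- For every real `t ≥ 0` one has `2·J₀(t) + J₀(2t) > −1`. -/
theorem two_besselJ0_add_besselJ0_two_mul_gt_neg_one (t : ℝ) (ht : 0 ≤ t) :
    2 * besselJ0 t + besselJ0 (2 * t) > -1 := by
  rcases le_or_gt t 6 with h6 | h6
  · exact small_t t ht h6
  · exact large_t t (le_of_lt h6)
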